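/- In the two-state Markov chain with states s, t where s stays at s with probability 1/2 and moves to t with probability 1/2, and t is absorbing, starting from s: (1) for every λ ≥ 1, the probability of the direct fixed window parity objective DFW(λ) (with p(s)=1 and p(t)=0) is strictly less than 1 — in fact the probability of staying in s for at least λ steps is 1/2^{λ-1} > 0; (2) the probability of the direct bounded window objective DBW = ⋃_{λ≥1} DFW(λ) equals 1, since t is reached almost surely in finite time. -/

import Mathlib

open MeasureTheory

/-- Transition matrix of the two-state Markov chain: `s → s` w.p. 1/2,
`s → t` w.p. 1/2, `t` absorbing. -/
noncomputable def P2 : Fin 2 → Fin 2 → ENNReal := ![![1/2, 1/2], ![0, 1]]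

lemma fin2_eq_one_iff (x : Fin 2) : x = 1 ↔ ¬ x = 0 := by
  fin_cases x <;> simp

lemma meas_all_zero (n : ℕ) :
    MeasurableSet {ρ : ℕ → Fin 2 | ∀ i ≤ n, ρ i = 0} := by
  have : {ρ : ℕ → Fin 2 | ∀ i ≤ n, ρ i = 0}
      = ⋂ i, ⋂ _ : i ≤ n, (fun ρ : ℕ → Fin 2 => ρ i) ⁻¹' {0} := by
    ext ρ; simp
  rw [this]
  exact MeasurableSet.iInter fun i => MeasurableSet.iInter fun _ =>
    (measurable_pi_apply i) (measurableSet_singleton _)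

/-- In the two-state chain started at `s` (state 0): for each `λ ≥ 1` the
probability of staying in `s` for at least `λ` steps is `1/2^(λ-1) > 0`, so
`DFW(λ)` (reach `t` within `λ - 1` steps) has probability `< 1`; yet the direct
bounded window objective `DBW = ⋃_{λ≥1} DFW(λ)` has probability 1. -/
theorem dfw_dbw_two_state (μ : Measure (ℕ → Fin 2)) [IsProbabilityMeasure μ]
    (hμ : ∀ (n : ℕ) (f : ℕ → Fin 2), f 0 = 0 →
      μ {ρ | ∀ i ≤ n, ρ i = f i} = ∏ i ∈ Finset.range n, P2 (f i) (f (i + 1))) :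
    (∀ lam : ℕ, 1 ≤ lam →
      μ {ρ | ∀ i < lam, ρ i = 0} = (1/2 : ENNReal) ^ (lam - 1) ∧
      0 < μ {ρ | ∀ i < lam, ρ i = 0} ∧
      μ {ρ | ∃ l, l ≤ lam - 1 ∧ ρ l = 1} < 1) ∧
    μ (⋃ lam ∈ {l : ℕ | 1 ≤ l}, {ρ : ℕ → Fin 2 | ∃ l, l ≤ lam - 1 ∧ ρ l = 1}) = 1 := by
  have key : ∀ n : ℕ, μ {ρ | ∀ i ≤ n, ρ i = 0} = (1/2 : ENNReal) ^ n := by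
    intro n
    have h := hμ n (fun _ => 0) rfl
    simpa [P2] using h
  have hhalf_pos : ∀ n : ℕ, (0 : ENNReal) < (1/2) ^ n := by
    intro n
    exact ENNReal.pow_pos (by norm_num) n
  constructor
  · intro lam hlam
    have hset : {ρ : ℕ → Fin 2 | ∀ i < lam, ρ i = 0}
        = {ρ : ℕ → Fin 2 | ∀ i ≤ lam - 1, ρ i = 0} := by
      ext ρ
      constructor
      · intro h i hi; exact h i (by omega)
      · intro h i hi; exact h i (by omega)
    have h1 : μ {ρ | ∀ i < lam, ρ i = 0} = (1/2 : ENNReal) ^ (lam - 1) := by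
      rw [hset, key]
    refine ⟨h1, by rw [h1]; exact hhalf_pos _, ?_⟩
    have hcompl : {ρ : ℕ → Fin 2 | ∃ l, l ≤ lam - 1 ∧ ρ l = 1}
        = {ρ : ℕ → Fin 2 | ∀ i ≤ lam - 1, ρ i = 0}ᶜ := by
      ext ρ
      simp only [Set.mem_setOf_eq, Set.mem_compl_iff, not_forall]
      constructor
      · rintro ⟨l, hl, h1⟩
        exact ⟨l, hl, (fin2_eq_one_iff _).mp h1⟩
      · rintro ⟨l, hl, h0⟩
        exact ⟨l, hl, (fin2_eq_one_iff _).mpr h0⟩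
    rw [hcompl, prob_compl_eq_one_sub (meas_all_zero _), key]
    exact ENNReal.sub_lt_self ENNReal.one_ne_top one_ne_zero (hhalf_pos _).ne'
  · have hunion : (⋃ lam ∈ {l : ℕ | 1 ≤ l},
        {ρ : ℕ → Fin 2 | ∃ l, l ≤ lam - 1 ∧ ρ l = 1})
        = {ρ : ℕ → Fin 2 | ∀ i, ρ i = 0}ᶜ := by
      ext ρ
      simp only [Set.mem_iUnion, Set.mem_setOf_eq, Set.mem_compl_iff, not_forall]
      constructor
      · rintro ⟨lam, _, l, _, h1⟩
        exact ⟨l, (fin2_eq_one_iff _).mp h1⟩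
      · rintro ⟨l, h0⟩
        exact ⟨l + 1, by omega, l, by omega, (fin2_eq_one_iff _).mpr h0⟩
    have hmeas : MeasurableSet {ρ : ℕ → Fin 2 | ∀ i, ρ i = 0} := by
      have : {ρ : ℕ → Fin 2 | ∀ i, ρ i = 0}
          = ⋂ i, (fun ρ : ℕ → Fin 2 => ρ i) ⁻¹' {0} := by
        ext ρ; simp
      rw [this]
      exact MeasurableSet.iInter fun i =>
        (measurable_pi_apply i) (measurableSet_singleton _)
    have hzero : μ {ρ : ℕ → Fin 2 | ∀ i, ρ i = 0} = 0 := by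
      have hle : ∀ n : ℕ, μ {ρ : ℕ → Fin 2 | ∀ i, ρ i = 0} ≤ (1/2 : ENNReal) ^ n := by
        intro n
        rw [← key n]
        exact measure_mono fun ρ h i _ => h i
      have htend : Filter.Tendsto (fun n : ℕ => (1/2 : ENNReal) ^ n)
          Filter.atTop (nhds 0) :=
        ENNReal.tendsto_pow_atTop_nhds_zero_of_lt_one (by norm_num)
      exact le_antisymm (ge_of_tendsto' htend hle) zero_le
    rw [hunion, prob_compl_eq_one_sub hmeas, hzero, tsub_zero]
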